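/- arXiv:2407.05259 — 3 statements merged into one kernel-verified Lean document; each statement's English description precedes it below -/
import Mathlib

section
/- Let T ≥ 3 be an integer and let t be an integer with 2 ≤ t ≤ T−1. Then δ_{t−1} > 0, δ_t > 0, δ_{t|t−1} > 0, and for all real numbers x₀, y, x_t, x_{t−1} the Gaussian density product identity G(a_t·x_{t−1} + b_t·y, δ_{t|t−1}; x_t) · G((1−m_{t−1})·x₀ + m_{t−1}·y, δ_{t−1}; x_{t−1}) = G(μ'_t, δ'_t; x_{t−1}) · G((1−m_t)·x₀ + m_t·y, δ_t; x_t) holds, where μ'_t = (δ_{t−1}/δ_t)·a_t·x_t + (1−m_{t−1})·(δ_{t|t−1}/δ_t)·x₀ + (m_{t−1} − m_t·(δ_{t−1}/δ_t)·a_t)·y and δ'_t = δ_{t|t−1}·δ_{t−1}/δ_t. (This is the statement that the reverse transition of the Brownian bridge diffusion process given x_t, x₀, y is the Gaussian N(μ'_t, δ'_t).) -/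
open Real

/-- The density of the real Gaussian distribution `N(μ, δ)`. -/
noncomputable def G (μ δ x : ℝ) : ℝ :=
  (2 * π * δ) ^ (-(1 / 2 : ℝ)) * Real.exp (-(x - μ) ^ 2 / (2 * δ))

/-- `m_t = t / T`. -/
noncomputable def mBB (T t : ℕ) : ℝ := (t : ℝ) / (T : ℝ)

/-- `δ_t = t (T - t) / T²`. -/
noncomputable def δBB (T t : ℕ) : ℝ := (t : ℝ) * ((T : ℝ) - (t : ℝ)) / (T : ℝ) ^ 2

/-- `a_t = (1 - m_t) / (1 - m_{t-1})`. -/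
noncomputable def aBB (T t : ℕ) : ℝ := (1 - mBB T t) / (1 - mBB T (t - 1))

/-- `b_t = m_t - a_t m_{t-1}`. -/
noncomputable def bBB (T t : ℕ) : ℝ := mBB T t - aBB T t * mBB T (t - 1)

/-- `δ_{t|t-1} = δ_t - δ_{t-1} a_t²`. -/
noncomputable def δcond (T t : ℕ) : ℝ := δBB T t - δBB T (t - 1) * aBB T t ^ 2

lemma gauss_prod (δ1 δ2 a c m : ℝ) (h1 : 0 < δ1) (h2 : 0 < δ2) (x x' : ℝ) :
    G (a * x' + c) δ1 x * G m δ2 x' =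
      G ((a * δ2 * (x - c) + δ1 * m) / (δ1 + a ^ 2 * δ2))
          (δ1 * δ2 / (δ1 + a ^ 2 * δ2)) x' *
        G (a * m + c) (δ1 + a ^ 2 * δ2) x := by
  have hδ : 0 < δ1 + a ^ 2 * δ2 := by positivity
  have hπ : 0 < π := Real.pi_pos
  unfold G
  have hcomb : ∀ p1 p2 u v : ℝ, p1 * Real.exp u * (p2 * Real.exp v) =
      p1 * p2 * Real.exp (u + v) := by
    intro p1 p2 u v; rw [Real.exp_add]; ring
  rw [hcomb, hcomb]
  have hpre : (2 * π * δ1) ^ (-(1 / 2 : ℝ)) * (2 * π * δ2) ^ (-(1 / 2 : ℝ)) =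
      (2 * π * (δ1 * δ2 / (δ1 + a ^ 2 * δ2))) ^ (-(1 / 2 : ℝ)) *
        (2 * π * (δ1 + a ^ 2 * δ2)) ^ (-(1 / 2 : ℝ)) := by
    rw [← Real.mul_rpow (by positivity) (by positivity),
        ← Real.mul_rpow (by positivity) (by positivity)]
    congr 1
    field_simp
  rw [hpre]
  congr 1
  congr 1
  have h1' := h1.ne'
  have h2' := h2.ne'
  have hδ' := hδ.ne'
  field_simp
  ring

/-- The reverse transition of the Brownian bridge diffusion process given `x_t, x₀, y`
is the Gaussian `N(μ'_t, δ'_t)`. -/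
theorem brownian_bridge_reverse_transition (T t : ℕ) (hT : 3 ≤ T) (ht : 2 ≤ t)
    (ht' : t ≤ T - 1) :
    0 < δBB T (t - 1) ∧ 0 < δBB T t ∧ 0 < δcond T t ∧
    ∀ x₀ y xt xtm : ℝ,
      G (aBB T t * xtm + bBB T t * y) (δcond T t) xt *
        G ((1 - mBB T (t - 1)) * x₀ + mBB T (t - 1) * y) (δBB T (t - 1)) xtm =
      G ((δBB T (t - 1) / δBB T t) * aBB T t * xt
            + (1 - mBB T (t - 1)) * (δcond T t / δBB T t) * x₀
            + (mBB T (t - 1) - mBB T t * (δBB T (t - 1) / δBB T t) * aBB T t) * y)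
          (δcond T t * δBB T (t - 1) / δBB T t) xtm *
        G ((1 - mBB T t) * x₀ + mBB T t * y) (δBB T t) xt := by
  have hcast : ((t - 1 : ℕ) : ℝ) = (t : ℝ) - 1 := by
    have : 1 ≤ t := le_trans (by norm_num) ht
    push_cast [this]; ring
  have hτ3 : (3 : ℝ) ≤ (T : ℝ) := by exact_mod_cast hT
  have hs2 : (2 : ℝ) ≤ (t : ℝ) := by exact_mod_cast ht
  have hsτ : (t : ℝ) + 1 ≤ (T : ℝ) := by
    have h1 : t + 1 ≤ T := by omega
    exact_mod_cast h1
  set τ : ℝ := (T : ℝ) with hτdef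
  set s : ℝ := (t : ℝ) with hsdef
  have hτ0 : (0 : ℝ) < τ := by linarith
  have hτne : τ ≠ 0 := ne_of_gt hτ0
  have hts1 : (0 : ℝ) < τ - s + 1 := by linarith
  have hts : (0 : ℝ) < τ - s := by linarith
  have hs1 : (0 : ℝ) < s - 1 := by linarith
  -- positivity of δ_{t-1}
  have hδtm : 0 < δBB T (t - 1) := by
    unfold δBB
    rw [hcast]
    have h2 : (0 : ℝ) < τ - (s - 1) := by linarith
    positivity
  -- positivity of δ_t
  have hδt : 0 < δBB T t := by
    unfold δBB
    positivity
  have hδtne : δBB T t ≠ 0 := ne_of_gt hδt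
  -- 1 - m_{t-1} ≠ 0
  have hmne : (1 : ℝ) - mBB T (t - 1) ≠ 0 := by
    unfold mBB
    rw [hcast]
    have : (1 : ℝ) - (s - 1) / τ = (τ - s + 1) / τ := by field_simp; ring
    rw [this]
    positivity
  -- value of δcond
  have hδcval : δcond T t = (τ - s) / (τ * (τ - s + 1)) := by
    unfold δcond δBB aBB mBB
    rw [hcast]
    rw [← hτdef, ← hsdef]
    have h1 : τ - (s - 1) ≠ 0 := by intro h; nlinarith
    field_simp
    ring
  have hδc : 0 < δcond T t := by
    rw [hδcval]; positivity
  refine ⟨hδtm, hδt, hδc, fun x₀ y xt xtm => ?_⟩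
  have key := gauss_prod (δcond T t) (δBB T (t - 1)) (aBB T t) (bBB T t * y)
      ((1 - mBB T (t - 1)) * x₀ + mBB T (t - 1) * y) hδc hδtm xt xtm
  have hδsum : δcond T t + aBB T t ^ 2 * δBB T (t - 1) = δBB T t := by
    unfold δcond; ring
  rw [hδsum] at key
  rw [key]
  congr 1
  · congr 1
    unfold bBB δcond
    field_simp
    ring
  · have ha : aBB T t * (1 - mBB T (t - 1)) = 1 - mBB T t := by
      unfold aBB; field_simp
    unfold bBB
    congr 1
    linear_combination x₀ * ha
end

section
/- Let T ≥ 2 be an integer, let t be an integer with 1 ≤ t ≤ T, and let x₀, y ∈ ℝ. Then the pushforward of the product measure (gaussianReal ((1−m_{t−1})·x₀ + m_{t−1}·y) δ_{t−1}) ⊗ (gaussianReal 0 δ_{t|t−1}) under the map (x, e) ↦ a_t·x + b_t·y + e equals gaussianReal ((1−m_t)·x₀ + m_t·y) δ_t. (This says the one-step forward kernel q(x_t | x_{t−1}, y) = N(a_t·x_{t−1} + b_t·y, δ_{t|t−1}) composed with the marginal at time t−1 reproduces the Brownian bridge marginal at time t.) -/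
open MeasureTheory ProbabilityTheory Real
open scoped NNReal ENNReal

lemma gaussianPDFReal_mul_aux (μ : ℝ) {v₁ v₂ : ℝ≥0} (hv₁ : v₁ ≠ 0) (hv₂ : v₂ ≠ 0) (z x : ℝ) :
    gaussianPDFReal μ v₁ x * gaussianPDFReal x v₂ z
      = gaussianPDFReal μ (v₁ + v₂) z *
        gaussianPDFReal (((v₂ : ℝ) * μ + (v₁ : ℝ) * z) / ((v₁ : ℝ) + (v₂ : ℝ)))
          (v₁ * v₂ / (v₁ + v₂)) x := by
  have h1 : (0:ℝ) < (v₁ : ℝ) := by positivity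
  have h2 : (0:ℝ) < (v₂ : ℝ) := by positivity
  have h12 : (0:ℝ) < (v₁ : ℝ) + (v₂ : ℝ) := by linarith
  have hcoe : ((v₁ * v₂ / (v₁ + v₂) : ℝ≥0) : ℝ) = (v₁ : ℝ) * (v₂ : ℝ) / ((v₁ : ℝ) + (v₂ : ℝ)) := by
    push_cast; ring
  simp only [gaussianPDFReal, NNReal.coe_add, hcoe]
  have hc : √(2 * π * (v₁:ℝ)) * √(2 * π * (v₂:ℝ))
      = √(2 * π * ((v₁:ℝ) + (v₂:ℝ))) * √(2 * π * ((v₁:ℝ) * (v₂:ℝ) / ((v₁:ℝ) + (v₂:ℝ)))) := by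
    rw [← Real.sqrt_mul (by positivity), ← Real.sqrt_mul (by positivity)]
    congr 1
    field_simp
  have he : -(x - μ) ^ 2 / (2 * (v₁:ℝ)) + -(z - x) ^ 2 / (2 * (v₂:ℝ))
      = -(z - μ) ^ 2 / (2 * ((v₁:ℝ) + (v₂:ℝ)))
        + -(x - ((v₂:ℝ) * μ + (v₁:ℝ) * z) / ((v₁:ℝ) + (v₂:ℝ))) ^ 2
            / (2 * ((v₁:ℝ) * (v₂:ℝ) / ((v₁:ℝ) + (v₂:ℝ)))) := by
    field_simp
    ring
  rw [mul_mul_mul_comm, mul_mul_mul_comm (√(2 * π * ((v₁:ℝ) + (v₂:ℝ))))⁻¹,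
    ← mul_inv, ← mul_inv, ← Real.exp_add, ← Real.exp_add, hc, he]

lemma gaussianReal_prod_add (μ : ℝ) (v₁ v₂ : ℝ≥0) :
    ((gaussianReal μ v₁).prod (gaussianReal 0 v₂)).map (fun p : ℝ × ℝ => p.1 + p.2)
      = gaussianReal μ (v₁ + v₂) := by
  by_cases hv₂ : v₂ = 0
  · subst hv₂
    rw [gaussianReal_zero_var, Measure.prod_dirac,
      Measure.map_map (by fun_prop) (by fun_prop)]
    have : ((fun p : ℝ × ℝ => p.1 + p.2) ∘ fun x : ℝ => (x, (0:ℝ))) = id := by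
      funext x; simp
    rw [this, Measure.map_id, add_zero]
  by_cases hv₁ : v₁ = 0
  · subst hv₁
    rw [gaussianReal_zero_var, Measure.dirac_prod,
      Measure.map_map (by fun_prop) (by fun_prop)]
    have : ((fun p : ℝ × ℝ => p.1 + p.2) ∘ Prod.mk μ) = (μ + ·) := rfl
    rw [this, gaussianReal_map_const_add, zero_add, zero_add]
  · have hv₁₂ : v₁ + v₂ ≠ 0 := by simp [hv₁]
    have hv' : v₁ * v₂ / (v₁ + v₂) ≠ 0 := by
      simp [div_eq_zero_iff, hv₁, hv₂]
    ext s hs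
    rw [Measure.map_apply (by fun_prop) hs,
      Measure.prod_apply (hs.preimage (by fun_prop))]
    have h2 : ∀ x : ℝ,
        gaussianReal 0 v₂ (Prod.mk x ⁻¹' ((fun p : ℝ × ℝ => p.1 + p.2) ⁻¹' s))
          = gaussianReal x v₂ s := by
      intro x
      have hpre : (Prod.mk x ⁻¹' ((fun p : ℝ × ℝ => p.1 + p.2) ⁻¹' s))
          = (x + ·) ⁻¹' s := rfl
      rw [hpre, ← Measure.map_apply (by fun_prop) hs, gaussianReal_map_const_add, zero_add]
    simp only [h2]
    have hjm : Measurable (fun q : ℝ × ℝ => gaussianPDF q.1 v₂ q.2) := by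
      have : (fun q : ℝ × ℝ => gaussianPDF q.1 v₂ q.2)
          = fun q : ℝ × ℝ => ENNReal.ofReal (gaussianPDFReal 0 v₂ (q.2 - q.1)) := by
        funext q
        rw [gaussianPDF, gaussianPDFReal_sub, zero_add]
      rw [this]
      exact ((measurable_gaussianPDFReal 0 v₂).comp
        (measurable_snd.sub measurable_fst)).ennreal_ofReal
    simp_rw [gaussianReal_apply _ hv₂ s]
    have hgm : Measurable fun x : ℝ => ∫⁻ z in s, gaussianPDF x v₂ z := by
      exact hjm.lintegral_prod_right'
    rw [gaussianReal_of_var_ne_zero _ hv₁,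
      lintegral_withDensity_eq_lintegral_mul _ (measurable_gaussianPDF μ v₁) hgm]
    simp only [Pi.mul_apply]
    have hpull : ∀ x : ℝ, gaussianPDF μ v₁ x * ∫⁻ z in s, gaussianPDF x v₂ z
        = ∫⁻ z in s, gaussianPDF μ v₁ x * gaussianPDF x v₂ z := by
      intro x
      rw [← lintegral_const_mul _ (measurable_gaussianPDF x v₂)]
    simp_rw [hpull]
    rw [lintegral_lintegral_swap]
    · have hinner : ∀ z : ℝ, (∫⁻ x, gaussianPDF μ v₁ x * gaussianPDF x v₂ z)
          = gaussianPDF μ (v₁ + v₂) z := by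
        intro z
        have : ∀ x : ℝ, gaussianPDF μ v₁ x * gaussianPDF x v₂ z
            = gaussianPDF μ (v₁ + v₂) z *
              gaussianPDF (((v₂ : ℝ) * μ + (v₁ : ℝ) * z) / ((v₁ : ℝ) + (v₂ : ℝ)))
                (v₁ * v₂ / (v₁ + v₂)) x := by
          intro x
          rw [gaussianPDF, gaussianPDF, gaussianPDF, gaussianPDF,
            ← ENNReal.ofReal_mul (gaussianPDFReal_nonneg _ _ _),
            ← ENNReal.ofReal_mul (gaussianPDFReal_nonneg _ _ _),
            gaussianPDFReal_mul_aux μ hv₁ hv₂ z x]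
        simp_rw [this]
        rw [lintegral_const_mul _ (measurable_gaussianPDF _ _),
          lintegral_gaussianPDF_eq_one _ hv', mul_one]
      simp_rw [hinner]
      rw [← gaussianReal_apply _ hv₁₂ s]
    · exact ((measurable_gaussianPDF μ v₁).comp measurable_fst).mul
        (hjm.comp (measurable_fst.prodMk measurable_snd)) |>.aemeasurable

/-- The one-step forward kernel `q(x_t | x_{t-1}, y) = N(a_t x_{t-1} + b_t y, δ_{t|t-1})`
composed with the Brownian bridge marginal at time `t-1` reproduces the Brownian bridge
marginal at time `t`. -/
theorem brownian_bridge_one_step_forward (T t : ℕ) (hT : 2 ≤ T) (ht1 : 1 ≤ t) (ht2 : t ≤ T)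
    (x₀ y : ℝ) :
    ((gaussianReal ((1 - mBB T (t - 1)) * x₀ + mBB T (t - 1) * y)
          (δBB T (t - 1)).toNNReal).prod
        (gaussianReal 0 (δcond T t).toNNReal)).map
      (fun p : ℝ × ℝ => aBB T t * p.1 + bBB T t * y + p.2) =
    gaussianReal ((1 - mBB T t) * x₀ + mBB T t * y) (δBB T t).toNNReal := by
  have hT0 : (0:ℝ) < (T:ℝ) := by
    have : (2:ℝ) ≤ (T:ℝ) := by exact_mod_cast hT
    linarith
  have htT : (t:ℝ) ≤ (T:ℝ) := by exact_mod_cast ht2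
  have ht1' : (1:ℝ) ≤ (t:ℝ) := by exact_mod_cast ht1
  have hts : ((t - 1 : ℕ) : ℝ) = (t:ℝ) - 1 := by
    rw [Nat.cast_sub ht1, Nat.cast_one]
  have hm' : 1 - mBB T (t - 1) ≠ 0 := by
    rw [mBB, hts]
    have : ((t:ℝ) - 1) / (T:ℝ) < 1 := by
      rw [div_lt_one hT0]; linarith
    linarith
  have hden : (T:ℝ) - (t:ℝ) + 1 ≠ 0 := by linarith
  -- rewrite the map as a composition
  set a := aBB T t with ha_def
  set b := bBB T t with hb_def
  have hfun : (fun p : ℝ × ℝ => a * p.1 + b * y + p.2)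
      = (fun p : ℝ × ℝ => p.1 + p.2) ∘ (Prod.map (fun x : ℝ => a * x + b * y) id) := rfl
  rw [hfun, ← Measure.map_map (by fun_prop) (by fun_prop),
    ← Measure.map_prod_map _ _ (by fun_prop) measurable_id, Measure.map_id]
  have hmap : (gaussianReal ((1 - mBB T (t - 1)) * x₀ + mBB T (t - 1) * y)
        (δBB T (t - 1)).toNNReal).map (fun x : ℝ => a * x + b * y)
      = gaussianReal (a * ((1 - mBB T (t - 1)) * x₀ + mBB T (t - 1) * y) + b * y)
        (NNReal.mk (a ^ 2) (sq_nonneg a) * (δBB T (t - 1)).toNNReal) := by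
    have hc : (fun x : ℝ => a * x + b * y) = (· + b * y) ∘ (a * ·) := rfl
    rw [hc, ← Measure.map_map (by fun_prop) (by fun_prop),
      gaussianReal_map_const_mul, gaussianReal_map_add_const]
  rw [hmap, gaussianReal_prod_add]
  -- equality of means and variances
  have ha : a * (1 - mBB T (t - 1)) = 1 - mBB T t := by
    rw [ha_def, aBB, div_mul_cancel₀ _ hm']
  have hδ' : 0 ≤ δBB T (t - 1) := by
    rw [δBB]
    apply div_nonneg _ (by positivity)
    apply mul_nonneg (Nat.cast_nonneg _)
    have : ((t - 1 : ℕ) : ℝ) ≤ (T:ℝ) := by rw [hts]; linarith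
    linarith
  have hδ : 0 ≤ δBB T t := by
    rw [δBB]
    apply div_nonneg _ (by positivity)
    exact mul_nonneg (Nat.cast_nonneg _) (by linarith)
  have ha_eq : a = ((T:ℝ) - (t:ℝ)) / ((T:ℝ) - (t:ℝ) + 1) := by
    rw [ha_def, aBB, mBB, mBB, hts]
    rw [show 1 - (t:ℝ) / (T:ℝ) = ((T:ℝ) - (t:ℝ)) / (T:ℝ) by field_simp,
      show 1 - ((t:ℝ) - 1) / (T:ℝ) = ((T:ℝ) - (t:ℝ) + 1) / (T:ℝ) by field_simp; ring]
    rw [div_div_div_eq]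
    field_simp
  have hδc_eq : δcond T t = ((T:ℝ) - (t:ℝ)) / (((T:ℝ) - (t:ℝ) + 1) * (T:ℝ)) := by
    rw [δcond, δBB, δBB, hts, ← ha_def, ha_eq]
    field_simp
    ring
  have hδc : 0 ≤ δcond T t := by
    rw [hδc_eq]
    apply div_nonneg (by linarith)
    have : (0:ℝ) < ((T:ℝ) - (t:ℝ) + 1) * (T:ℝ) := by
      apply mul_pos _ hT0; linarith
    linarith
  congr 1
  · -- means
    rw [hb_def, bBB]
    have : a * (1 - mBB T (t - 1)) * x₀ = (1 - mBB T t) * x₀ := by rw [ha]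
    ring_nf
    linear_combination x₀ * ha
  · -- variances
    have hsum : a ^ 2 * δBB T (t - 1) + δcond T t = δBB T t := by
      rw [δcond]; ring
    apply NNReal.coe_injective
    push_cast
    rw [Real.coe_toNNReal _ hδ', Real.coe_toNNReal _ hδc, Real.coe_toNNReal _ hδ]
    linarith [hsum]
end

section
/- There exists a universal constant C > 0 with the following property. Let d ≥ 1 and let λ₁, …, λ_d be positive real numbers with λ_i ≠ 1 for all i and Σ_i λ_i = d (the eigenvalues of a covariance matrix Σ with Tr(Σ) = d), and let κ = (max_i λ_i)/(min_i λ_i) be the condition number. Define f(u) = u − log(1+u), Ψ_T(T) = f(e^{−4T}·|Σ_i (λ_i − 1)·λ_i|) for T ≥ 0, and Ψ_Δ(Δt) = f(Δt·|Σ_i (1/λ_i − λ_i·log(λ_i)/(2(λ_i − 1)) + (1 − 1/λ_i)/3)|) for Δt > 0. Then for every ε > 0 there exist T > 0 and Δt > 0 such that (1/d)·(Ψ_T(T) + Ψ_Δ(Δt)) ≤ ε and T/Δt ≤ C·ε^{−2}·κ³. (Hence the number of sampling steps N = T/Δt needed to achieve error ε scales as O(ε^{−2} κ³).) -/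
/-- `f(u) = u - log(1 + u)`, the function through which the discretization and truncation
errors of the reverse diffusion sampler are expressed. -/
noncomputable def fErr (u : ℝ) : ℝ := u - Real.log (1 + u)

lemma fErr_le_self {u : ℝ} (hu : 0 ≤ u) : fErr u ≤ u := by
  unfold fErr
  have := Real.log_nonneg (by linarith : (1:ℝ) ≤ 1 + u)
  linarith

lemma g_term_bound {l k : ℝ} (h0 : 0 < l) (h1 : l ≠ 1) (hk1 : 1 ≤ k)
    (hlk : l ≤ k) (hik : 1 / l ≤ k) :
    |1 / l - l * Real.log l / (2 * (l - 1)) + (1 - 1 / l) / 3| ≤ 3 * k := by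
  have hlub : Real.log l ≤ l - 1 := Real.log_le_sub_one_of_pos h0
  have hinv0 : 0 < 1 / l := by positivity
  have hllb : 1 - 1 / l ≤ Real.log l := by
    have h := Real.log_le_sub_one_of_pos hinv0
    rw [one_div, Real.log_inv, inv_eq_one_div] at h
    linarith
  have hil : 0 < 1 / l := hinv0
  have hH : 0 ≤ l * Real.log l / (l - 1) ∧ l * Real.log l / (l - 1) ≤ k := by
    rcases h1.lt_or_gt with hlt | hgt
    · have hl1 : l - 1 < 0 := by linarith
      have hlogneg : Real.log l ≤ 0 := Real.log_nonpos h0.le hlt.le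
      constructor
      · rw [div_nonneg_iff]
        exact Or.inr ⟨mul_nonpos_of_nonneg_of_nonpos h0.le hlogneg, hl1.le⟩
      · rw [div_le_iff_of_neg hl1]
        have hcancel : l * (1 / l) = 1 := by field_simp
        nlinarith [mul_le_mul_of_nonneg_left hllb h0.le]
    · have hl1 : (0:ℝ) < l - 1 := by linarith
      have hlogpos : 0 ≤ Real.log l := Real.log_nonneg (by linarith)
      constructor
      · exact div_nonneg (mul_nonneg h0.le hlogpos) hl1.le
      · rw [div_le_iff₀ hl1]
        nlinarith
  obtain ⟨hH0, hHk⟩ := hH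
  have hmid : l * Real.log l / (2 * (l - 1)) = (l * Real.log l / (l - 1)) / 2 := by
    rw [mul_comm 2 (l - 1), ← div_div]
  rw [hmid, abs_le]
  constructor
  · nlinarith
  · nlinarith

set_option maxHeartbeats 1000000 in
/-- The number of sampling steps `N = T/Δt` needed to achieve error `ε` for a Gaussian data
distribution with eigenvalues `λ₁, …, λ_d` (satisfying `Tr Σ = d`) and condition number `κ`
scales as `O(ε⁻² κ³)`. -/
theorem sampling_steps_bound :
    ∃ C : ℝ, 0 < C ∧
      ∀ d : ℕ, 1 ≤ d → ∀ lam : Fin d → ℝ,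
        (∀ i, 0 < lam i) → (∀ i, lam i ≠ 1) → (∑ i, lam i = (d : ℝ)) →
        ∀ ε : ℝ, 0 < ε →
          ∃ T : ℝ, 0 < T ∧ ∃ Δt : ℝ, 0 < Δt ∧
            (1 / (d : ℝ)) *
                (fErr (Real.exp (-(4 * T)) * |∑ i, (lam i - 1) * lam i|) +
                  fErr (Δt * |∑ i, (1 / lam i
                      - lam i * Real.log (lam i) / (2 * (lam i - 1))
                      + (1 - 1 / lam i) / 3)|)) ≤ ε ∧
            T / Δt ≤ C * ε ^ (-2 : ℤ) * ((⨆ i, lam i) / (⨅ i, lam i)) ^ 3 := by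
  refine ⟨4, by norm_num, ?_⟩
  intro d hd lam hpos hne hsum ε hε
  have hd0 : (0:ℝ) < d := by exact_mod_cast hd
  haveI : Nonempty (Fin d) := ⟨⟨0, hd⟩⟩
  have hbddA : BddAbove (Set.range lam) := Set.Finite.bddAbove (Set.finite_range lam)
  have hbddB : BddBelow (Set.range lam) := Set.Finite.bddBelow (Set.finite_range lam)
  set M := ⨆ i, lam i with hMdef
  set m := ⨅ i, lam i with hmdef
  have hMi : ∀ i, lam i ≤ M := fun i => le_ciSup hbddA i
  have hmi : ∀ i, m ≤ lam i := fun i => ciInf_le hbddB i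
  have hm0 : 0 < m := by
    obtain ⟨j, hj⟩ := Finite.exists_min lam
    exact lt_of_lt_of_le (hpos j) (le_ciInf hj)
  have i0 : Fin d := ⟨0, hd⟩
  have hM1 : 1 ≤ M := by
    have h1 : (d:ℝ) ≤ d * M := by
      calc (d:ℝ) = ∑ i, lam i := hsum.symm
        _ ≤ ∑ _i : Fin d, M := Finset.sum_le_sum (fun i _ => hMi i)
        _ = d * M := by simp [Finset.sum_const, Finset.card_univ, nsmul_eq_mul]
    nlinarith
  have hm1 : m ≤ 1 := by
    have h1 : (d:ℝ) * m ≤ d := by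
      calc (d:ℝ) * m = ∑ _i : Fin d, m := by
            simp [Finset.sum_const, Finset.card_univ, nsmul_eq_mul]
        _ ≤ ∑ i, lam i := Finset.sum_le_sum (fun i _ => hmi i)
        _ = d := hsum
    nlinarith
  set κ := M / m with hκdef
  have hκ1 : 1 ≤ κ := by
    rw [hκdef, le_div_iff₀ hm0]
    nlinarith [hmi i0, hMi i0, hpos i0]
  have hlκ : ∀ i, lam i ≤ κ := by
    intro i
    refine (hMi i).trans ?_
    rw [hκdef, le_div_iff₀ hm0]
    nlinarith
  have hiκ : ∀ i, 1 / lam i ≤ κ := by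
    intro i
    calc 1 / lam i ≤ 1 / m := one_div_le_one_div_of_le hm0 (hmi i)
      _ ≤ M / m := by gcongr
      _ = κ := rfl
  clear_value M m κ
  set a := |∑ i, (lam i - 1) * lam i| with hadef
  set b := |∑ i, (1 / lam i - lam i * Real.log (lam i) / (2 * (lam i - 1))
      + (1 - 1 / lam i) / 3)| with hbdef
  -- positivity of a
  have hsq : ∑ i, (lam i - 1) * lam i = ∑ i, (lam i - 1) ^ 2 := by
    have h2 : ∑ i, ((lam i - 1) * lam i - (lam i - 1) ^ 2) = ∑ i, (lam i - 1) := by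
      exact Finset.sum_congr rfl (fun i _ => by ring)
    have h3 : ∑ i, (lam i - 1) = 0 := by
      rw [Finset.sum_sub_distrib, hsum]
      simp [Finset.sum_const, Finset.card_univ]
    rw [Finset.sum_sub_distrib, h3] at h2
    linarith
  have hsqpos : 0 < ∑ i, (lam i - 1) ^ 2 := by
    apply Finset.sum_pos' (fun i _ => sq_nonneg _)
    refine ⟨i0, Finset.mem_univ _, ?_⟩
    have : lam i0 - 1 ≠ 0 := sub_ne_zero.mpr (hne i0)
    exact lt_of_le_of_ne (sq_nonneg _) (Ne.symm (pow_ne_zero 2 this))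
  have ha_pos : 0 < a := by
    rw [hadef, hsq, abs_of_pos hsqpos]
    exact hsqpos
  have ha_eq : a = ∑ i, (lam i - 1) * lam i := by
    rw [hadef, hsq, abs_of_pos hsqpos, ← hsq]
  have ha_ub : a ≤ d * κ := by
    rw [ha_eq]
    calc ∑ i, (lam i - 1) * lam i ≤ ∑ i, κ * lam i := by
          apply Finset.sum_le_sum
          intro i _
          nlinarith [hpos i, hlκ i, hκ1]
      _ = κ * ∑ i, lam i := by rw [Finset.mul_sum]
      _ = κ * d := by rw [hsum]
      _ = d * κ := by ring
  have hb0 : 0 ≤ b := abs_nonneg _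
  have hb_ub : b ≤ 3 * d * κ := by
    rw [hbdef]
    calc |∑ i, (1 / lam i - lam i * Real.log (lam i) / (2 * (lam i - 1))
          + (1 - 1 / lam i) / 3)|
        ≤ ∑ i, |1 / lam i - lam i * Real.log (lam i) / (2 * (lam i - 1))
          + (1 - 1 / lam i) / 3| := Finset.abs_sum_le_sum_abs _ _
      _ ≤ ∑ _i : Fin d, 3 * κ := Finset.sum_le_sum
          (fun i _ => g_term_bound (hpos i) (hne i) hκ1 (hlκ i) (hiκ i))
      _ = d * (3 * κ) := by simp [Finset.sum_const, Finset.card_univ, nsmul_eq_mul]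
      _ = 3 * d * κ := by ring
  clear_value a b
  -- choices
  set x := 1 + 2 * a / (ε * d) with hxdef
  have hx1 : 1 < x := by
    rw [hxdef]
    have : 0 < 2 * a / (ε * d) := by positivity
    linarith
  have hx0 : 0 < x := by linarith
  set T := Real.log x / 4 with hTdef
  have hT0 : 0 < T := by
    have := Real.log_pos hx1
    rw [hTdef]; linarith
  set Δt := ε * d / (2 * (b + 1)) with hΔdef
  have hΔ0 : 0 < Δt := by rw [hΔdef]; positivity
  clear_value x T Δt
  refine ⟨T, hT0, Δt, hΔ0, ?_, ?_⟩
  · -- error bound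
    have hexp : Real.exp (-(4 * T)) = x⁻¹ := by
      rw [hTdef]
      rw [show -(4 * (Real.log x / 4)) = -Real.log x by ring]
      rw [Real.exp_neg, Real.exp_log hx0]
    have hu1 : Real.exp (-(4 * T)) * a ≤ ε * d / 2 := by
      rw [hexp, inv_mul_eq_div, div_le_iff₀ hx0]
      have hxe : ε * d / 2 * x = ε * d / 2 + a := by
        rw [hxdef]
        field_simp
      rw [hxe]
      nlinarith [mul_pos hε hd0]
    have hu2 : Δt * b ≤ ε * d / 2 := by
      rw [hΔdef, div_mul_eq_mul_div, div_le_div_iff₀ (by positivity) (by norm_num)]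
      nlinarith
    have hf1 : fErr (Real.exp (-(4 * T)) * a) ≤ ε * d / 2 :=
      (fErr_le_self (by positivity)).trans hu1
    have hf2 : fErr (Δt * b) ≤ ε * d / 2 :=
      (fErr_le_self (by positivity)).trans hu2
    rw [one_div, inv_mul_le_iff₀ hd0]
    calc fErr (Real.exp (-(4 * T)) * a) + fErr (Δt * b) ≤ ε * d / 2 + ε * d / 2 := by
          linarith
      _ = (d:ℝ) * ε := by ring
  · -- step count bound
    have hz : ε ^ (-2 : ℤ) = (ε ^ 2)⁻¹ := by
      rw [show (-2 : ℤ) = -(2:ℕ) by norm_num, zpow_neg, zpow_natCast]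
    have hT_ub : T ≤ a / (2 * (ε * d)) := by
      have hlogx : Real.log x ≤ 2 * a / (ε * d) := by
        have := Real.log_le_sub_one_of_pos hx0
        rw [hxdef] at this ⊢
        linarith
      calc T = Real.log x / 4 := hTdef
        _ ≤ (2 * a / (ε * d)) / 4 := by linarith
        _ = a / (2 * (ε * d)) := by ring
    rw [div_le_iff₀ hΔ0, hz]
    have hrhs : 4 * (ε ^ 2)⁻¹ * κ ^ 3 * Δt = (4 * κ ^ 3 * d) / (ε * (2 * (b + 1))) := by
      rw [hΔdef]
      have hbne : (b : ℝ) + 1 ≠ 0 := by positivity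
      field_simp
    rw [hrhs]
    refine hT_ub.trans ?_
    rw [div_le_div_iff₀ (by positivity) (by positivity)]
    have hd1 : (1:ℝ) ≤ d := by exact_mod_cast hd
    have hdκ : 1 ≤ (d:ℝ) * κ := by
      have := mul_le_mul hd1 hκ1 zero_le_one (by linarith : (0:ℝ) ≤ d)
      linarith
    have hbb : b + 1 ≤ 4 * d * κ := by linarith
    have hstep : a * (b + 1) ≤ 4 * (d:ℝ) ^ 2 * κ ^ 3 := by
      nlinarith [mul_le_mul ha_ub hbb (by linarith : (0:ℝ) ≤ b + 1)
          (mul_nonneg hd0.le (by linarith : (0:ℝ) ≤ κ)),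
        mul_nonneg (mul_nonneg hd0.le hd0.le)
          (mul_nonneg (sq_nonneg κ) (by linarith : (0:ℝ) ≤ κ - 1))]
    nlinarith [mul_le_mul_of_nonneg_left hstep (by positivity : (0:ℝ) ≤ 2 * ε)]
end
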